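/- Let T be a rooted phylogenetic X-tree whose positive edge lengths satisfy the ultrametric condition, and let k be a branching value of T. Then the number m(T,k) of size-k maxPD sets of T equals the product, over the k connected components κ₁(k),…,κ_k(k) of the forest T[R(d_k)], of the number λ(κ_i(k)) of leaves in each component: m(T,k) = ∏_{i=1}^{k} λ(κ_i(k)). -/

import Mathlib

/-!
Rooted phylogenetic `X`-trees with positive edge lengths.

A tree on a finite vertex type `V` is encoded by its parent function: the root
has no parent, every other vertex has one, and iterating the parent function
reaches the root.  The edge into a non-root vertex `v` has length `len v`, and
`hgt v` is the distance from the root to `v`.  Leaves are the vertices with no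
children; the taxon set `X` of the paper is the set `leaves` of leaves.
Every non-leaf, non-root vertex has out-degree (number of children) at least 2.
-/

noncomputable section

attribute [local instance] Classical.propDecidable

structure PhyloTree (V : Type) [Fintype V] [DecidableEq V] where
  root : V
  parent : V → Option V
  len : V → ℝ
  hgt : V → ℝ
  parent_root : parent root = none
  parent_isSome : ∀ v, v ≠ root → (parent v).isSome
  reaches_root : ∀ v, Relation.ReflTransGen (fun a b => parent a = some b) v root
  hgt_root : hgt root = 0
  hgt_eq : ∀ v u, parent v = some u → hgt v = hgt u + len v
  len_pos : ∀ v, v ≠ root → 0 < len v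
  outdeg_ge_two : ∀ v, v ≠ root → (∃ u, parent u = some v) →
    2 ≤ Set.ncard {u | parent u = some v}

namespace PhyloTree

variable {V : Type} [Fintype V] [DecidableEq V]

/-- `T.step a b` : `b` is the parent of `a`. -/
def step (T : PhyloTree V) (a b : V) : Prop := T.parent a = some b

/-- `T.anc u v` : `u` is an ancestor of `v`, i.e. `u` lies on the (unique) path
from the root to `v` (reflexively). -/
def anc (T : PhyloTree V) (u v : V) : Prop := Relation.ReflTransGen T.step v u

/-- a leaf is a vertex with no children. -/
def IsLeaf (T : PhyloTree V) (v : V) : Prop := ∀ u, T.parent u ≠ some v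

/-- the leaf set (the taxon set `X`). -/
def leaves (T : PhyloTree V) : Set V := {v | T.IsLeaf v}

/-- Phylogenetic diversity of a set `Y`: the total length of all edges `e`
whose set of descendant leaves meets `Y` (the edge into a non-root vertex `v`
has length `T.len v`). -/
def PD (T : PhyloTree V) (Y : Set V) : ℝ :=
  ∑ v : V, if v ≠ T.root ∧ ∃ x ∈ Y, T.IsLeaf x ∧ T.anc v x then T.len v else 0

/-- the ultrametric condition: all leaves are at the same distance from the root. -/
def Ultrametric (T : PhyloTree V) : Prop :=
  ∀ x y, T.IsLeaf x → T.IsLeaf y → T.hgt x = T.hgt y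

/-- `R d`: the set of vertices within distance `d` above some leaf. -/
def R (T : PhyloTree V) (d : ℝ) : Set V :=
  {v | ∃ x, T.IsLeaf x ∧ T.anc v x ∧ T.hgt x - T.hgt v ≤ d}

/-- adjacency in the forest induced by `T` on a vertex set `S`. -/
def adjIn (T : PhyloTree V) (S : Set V) (u v : V) : Prop :=
  u ∈ S ∧ v ∈ S ∧ (T.parent u = some v ∨ T.parent v = some u)

/-- the connected components of the forest induced by `T` on `S`. -/
def components (T : PhyloTree V) (S : Set V) : Set (Set V) :=
  {C | ∃ v ∈ S, C = S ∩ {u | Relation.ReflTransGen (T.adjIn S) v u}}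

/-- `c d`: the number of connected components of the forest `T[R(d)]`. -/
def ccount (T : PhyloTree V) (d : ℝ) : ℕ := (T.components (T.R d)).ncard

/-- `k` is a branching value if `T[R(d)]` has exactly `k` components for some `d ≥ 0`. -/
def IsBranchingValue (T : PhyloTree V) (k : ℕ) : Prop := ∃ d : ℝ, 0 ≤ d ∧ T.ccount d = k

/-- the branching distance `d_k = min {d : c(d) = k}`. -/
def branchDist (T : PhyloTree V) (k : ℕ) : ℝ := sInf {d | 0 ≤ d ∧ T.ccount d = k}

/-- `k⁻`: the largest branching value `≤ k`. -/
def kminus (T : PhyloTree V) (k : ℕ) : ℕ := sSup {j | j ≤ k ∧ T.IsBranchingValue j}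

/-- `k⁺`: the smallest branching value `≥ k`. -/
def kplus (T : PhyloTree V) (k : ℕ) : ℕ := sInf {j | k ≤ j ∧ T.IsBranchingValue j}

/-- `A` is a size-`k` maxPD set. -/
def IsMaxPD (T : PhyloTree V) (k : ℕ) (A : Set V) : Prop :=
  A ⊆ T.leaves ∧ A.ncard = k ∧ ∀ Y ⊆ T.leaves, Y.ncard = k → T.PD Y ≤ T.PD A

/-- `A` is a size-`k` minPD set. -/
def IsMinPD (T : PhyloTree V) (k : ℕ) (A : Set V) : Prop :=
  A ⊆ T.leaves ∧ A.ncard = k ∧ ∀ Y ⊆ T.leaves, Y.ncard = k → T.PD A ≤ T.PD Y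

/-- `m T k`: the number of size-`k` maxPD sets of `T`. -/
def m (T : PhyloTree V) (k : ℕ) : ℕ := {A : Set V | T.IsMaxPD k A}.ncard

/-- `T` is binary: every non-leaf vertex has exactly two children. -/
def Binary (T : PhyloTree V) : Prop :=
  ∀ v, ¬ T.IsLeaf v → Set.ncard {u | T.parent u = some v} = 2

end PhyloTree
namespace PhyloTree

variable {V : Type} [Fintype V] [DecidableEq V] (T : PhyloTree V)

lemma step_ne_root {a b : V} (h : T.step a b) : a ≠ T.root := by
  intro rfl_; subst rfl_; simp [step, T.parent_root] at h

lemma hgt_lt_of_step {a b : V} (h : T.step a b) : T.hgt b < T.hgt a := by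
  have := T.hgt_eq a b h
  have hp := T.len_pos a (T.step_ne_root h)
  linarith

lemma hgt_le_of_anc {u v : V} (h : T.anc u v) : T.hgt u ≤ T.hgt v := by
  induction h with
  | refl => exact le_refl _
  | tail _ h2 ih => exact le_trans (le_of_lt (T.hgt_lt_of_step h2)) ih

lemma hgt_lt_of_anc_ne {u v : V} (h : T.anc u v) (hne : u ≠ v) : T.hgt u < T.hgt v := by
  rcases (Relation.ReflTransGen.cases_tail h) with h1 | ⟨w, hw1, hw2⟩
  · exact absurd h1.symm hne.symm
  · exact lt_of_lt_of_le (T.hgt_lt_of_step hw2) (T.hgt_le_of_anc hw1)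

lemma anc_antisymm {u v : V} (h1 : T.anc u v) (h2 : T.anc v u) : u = v := by
  by_contra hne
  exact absurd (T.hgt_lt_of_anc_ne h1 hne) (not_lt.mpr (T.hgt_le_of_anc h2))

lemma anc_trans {u v w : V} (h1 : T.anc u v) (h2 : T.anc v w) : T.anc u w :=
  Relation.ReflTransGen.trans h2 h1

lemma anc_refl (v : V) : T.anc v v := Relation.ReflTransGen.refl

lemma anc_root (v : V) : T.anc T.root v := T.reaches_root v

lemma hgt_nonneg (v : V) : 0 ≤ T.hgt v := by
  have := T.hgt_le_of_anc (T.anc_root v); rwa [T.hgt_root] at this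

lemma anc_of_step {a b : V} (h : T.step a b) : T.anc b a :=
  Relation.ReflTransGen.single h

lemma anc_head_cases {u v : V} (h : T.anc u v) : u = v ∨ ∃ w, T.step v w ∧ T.anc u w := by
  rcases Relation.ReflTransGen.cases_head h with h1 | ⟨w, hw1, hw2⟩
  · exact Or.inl h1.symm
  · exact Or.inr ⟨w, hw1, hw2⟩

lemma step_unique {a b c : V} (h1 : T.step a b) (h2 : T.step a c) : b = c := by
  unfold step at h1 h2; rw [h1] at h2; exact Option.some.inj h2

lemma anc_comparable {u w x : V} (h1 : T.anc u x) (h2 : T.anc w x) :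
    T.anc u w ∨ T.anc w u := by
  unfold anc at h1 h2
  revert h2
  induction h1 using Relation.ReflTransGen.head_induction_on with
  | refl => intro h2; exact Or.inr h2
  | @head a c hstep htail ih =>
    intro h2
    rcases Relation.ReflTransGen.cases_head h2 with h' | ⟨c', hc1, hc2⟩
    · exact Or.inl (h'.symm ▸ (htail.head hstep))
    · have hcc : c' = c := T.step_unique hc1 hstep
      exact ih (hcc ▸ hc2)

lemma exists_leaf_desc_aux : ∀ n (v : V), ({w | T.anc v w}.toFinset).card ≤ n →
    ∃ x, T.IsLeaf x ∧ T.anc v x := by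
  intro n
  induction n with
  | zero =>
    intro v hv
    exfalso
    have : v ∈ {w | T.anc v w}.toFinset := by simp [T.anc_refl v]
    have := Finset.card_pos.mpr ⟨v, this⟩
    omega
  | succ n ih =>
    intro v hv
    by_cases hleaf : T.IsLeaf v
    · exact ⟨v, hleaf, T.anc_refl v⟩
    · simp only [IsLeaf, not_forall, not_not] at hleaf
      obtain ⟨u, hu⟩ := hleaf
      have hstep : T.step u v := hu
      have hsub : {w | T.anc u w}.toFinset ⊆ {w | T.anc v w}.toFinset \ {v} := by
        intro w hw
        simp only [Set.mem_toFinset, Set.mem_setOf_eq] at hw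
        simp only [Finset.mem_sdiff, Set.mem_toFinset, Set.mem_setOf_eq, Finset.mem_singleton]
        constructor
        · exact T.anc_trans (T.anc_of_step hstep) hw
        · intro h'; subst h'
          have h1 : T.anc u w := hw
          have := T.hgt_lt_of_step hstep
          have := T.hgt_le_of_anc h1
          linarith
      have hcard : ({w | T.anc u w}.toFinset).card ≤ n := by
        have h1 := Finset.card_le_card hsub
        have h2 : ({w | T.anc v w}.toFinset \ {v}).card
            = ({w | T.anc v w}.toFinset).card - 1 := by
          rw [Finset.sdiff_singleton_eq_erase, Finset.card_erase_of_mem]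
          simp [T.anc_refl v]
        have h3 : 1 ≤ ({w | T.anc v w}.toFinset).card :=
          Finset.card_pos.mpr ⟨v, by simp [T.anc_refl v]⟩
        omega
      obtain ⟨x, hx1, hx2⟩ := ih u hcard
      exact ⟨x, hx1, T.anc_trans (T.anc_of_step hstep) hx2⟩

lemma exists_leaf_desc (v : V) : ∃ x, T.IsLeaf x ∧ T.anc v x :=
  T.exists_leaf_desc_aux _ v le_rfl

end PhyloTree
namespace PhyloTree

variable {V : Type} [Fintype V] [DecidableEq V] (T : PhyloTree V)

/-- the set `{v | h - hgt v ≤ d}`, which equals `R d` in the ultrametric case. -/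
def Sd (T : PhyloTree V) (h d : ℝ) : Set V := {v | h - T.hgt v ≤ d}

lemma mem_Sd {h d : ℝ} {v : V} : v ∈ T.Sd h d ↔ h - T.hgt v ≤ d := Iff.rfl

variable {h d : ℝ}

lemma hgt_le_h (hh : ∀ x, T.IsLeaf x → T.hgt x = h) (v : V) : T.hgt v ≤ h := by
  obtain ⟨x, hx1, hx2⟩ := T.exists_leaf_desc v
  have := T.hgt_le_of_anc hx2
  rw [hh x hx1] at this; exact this

lemma R_eq (hh : ∀ x, T.IsLeaf x → T.hgt x = h) : T.R d = T.Sd h d := by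
  ext v
  constructor
  · rintro ⟨x, hx1, hx2, hx3⟩
    rw [hh x hx1] at hx3; exact hx3
  · intro hv
    obtain ⟨x, hx1, hx2⟩ := T.exists_leaf_desc v
    exact ⟨x, hx1, hx2, by rw [hh x hx1]; exact hv⟩

lemma leaf_mem_Sd (hh : ∀ x, T.IsLeaf x → T.hgt x = h) (hd : 0 ≤ d)
    {x : V} (hx : T.IsLeaf x) : x ∈ T.Sd h d := by
  rw [mem_Sd, hh x hx]; linarith

lemma Sd_desc_closed {u v : V} (hu : u ∈ T.Sd h d) (hanc : T.anc u v) : v ∈ T.Sd h d := by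
  rw [mem_Sd] at hu ⊢
  have := T.hgt_le_of_anc hanc
  linarith

lemma adjIn_symm {S : Set V} {u v : V} (hadj : T.adjIn S u v) : T.adjIn S v u :=
  ⟨hadj.2.1, hadj.1, hadj.2.2.symm⟩

lemma relS_symm {S : Set V} {u v : V}
    (hrel : Relation.ReflTransGen (T.adjIn S) u v) :
    Relation.ReflTransGen (T.adjIn S) v u :=
  by haveI : Std.Symm (T.adjIn S) := ⟨fun _ _ => T.adjIn_symm⟩
     exact (Relation.ReflTransGen.symmetric (r := T.adjIn S)).symm _ _ hrel

lemma relS_of_anc {u v : V} (hanc : T.anc u v) (hu : u ∈ T.Sd h d) :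
    Relation.ReflTransGen (T.adjIn (T.Sd h d)) u v := by
  unfold anc at hanc
  induction hanc using Relation.ReflTransGen.head_induction_on with
  | refl => exact Relation.ReflTransGen.refl
  | @head a c hstep htail ih =>
    have hc : c ∈ T.Sd h d := T.Sd_desc_closed hu htail
    have ha : a ∈ T.Sd h d := T.Sd_desc_closed hc (T.anc_of_step hstep)
    exact (ih).tail ⟨hc, ha, Or.inr hstep⟩

/-- `r` is the top vertex of the component of `Sd` containing `v`. -/
def IsTop (T : PhyloTree V) (h d : ℝ) (r v : V) : Prop :=
  r ∈ T.Sd h d ∧ T.anc r v ∧ ∀ p, T.parent r = some p → p ∉ T.Sd h d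

lemma exists_isTop {v : V} (hv : v ∈ T.Sd h d) : ∃ r, T.IsTop h d r v := by
  classical
  have hne : (Finset.univ.filter (fun u => T.anc u v ∧ u ∈ T.Sd h d)).Nonempty :=
    ⟨v, by simp [T.anc_refl v, hv]⟩
  obtain ⟨r, hr, hmin⟩ := Finset.exists_min_image _ T.hgt hne
  simp only [Finset.mem_filter, Finset.mem_univ, true_and] at hr
  refine ⟨r, hr.2, hr.1, ?_⟩
  intro p hp hpS
  have hanc_pv : T.anc p v := T.anc_trans (T.anc_of_step hp) hr.1
  have := hmin p (by simp [hanc_pv, hpS])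
  have := T.hgt_lt_of_step (show T.step r p from hp)
  linarith

lemma isTop_unique {r₁ r₂ v : V} (h1 : T.IsTop h d r₁ v) (h2 : T.IsTop h d r₂ v) :
    r₁ = r₂ := by
  obtain ⟨hS1, ha1, hp1⟩ := h1
  obtain ⟨hS2, ha2, hp2⟩ := h2
  rcases T.anc_comparable ha1 ha2 with hc | hc
  · -- r₁ ancestor of r₂
    rcases T.anc_head_cases hc with he | ⟨p, hp, hanc⟩
    · exact he
    · exfalso
      exact hp2 p hp (T.Sd_desc_closed hS1 hanc)
  · rcases T.anc_head_cases hc with he | ⟨p, hp, hanc⟩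
    · exact he.symm
    · exfalso
      exact hp1 p hp (T.Sd_desc_closed hS2 hanc)

/-- top of the component of `v` (meaningful when `v ∈ Sd`). -/
noncomputable def topv (T : PhyloTree V) (h d : ℝ) (v : V) : V :=
  @Classical.epsilon V ⟨T.root⟩ (fun r => T.IsTop h d r v)

lemma topv_spec {v : V} (hv : v ∈ T.Sd h d) : T.IsTop h d (T.topv h d v) v :=
  Classical.epsilon_spec_aux ⟨T.root⟩ (fun r => T.IsTop h d r v) (T.exists_isTop hv)

lemma topv_eq {r v : V} (hr : T.IsTop h d r v) : T.topv h d v = r :=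
  T.isTop_unique (Classical.epsilon_spec_aux ⟨T.root⟩ (fun r => T.IsTop h d r v) ⟨r, hr⟩) hr

lemma topv_mem {v : V} (hv : v ∈ T.Sd h d) : T.topv h d v ∈ T.Sd h d :=
  (T.topv_spec hv).1

lemma topv_anc {v : V} (hv : v ∈ T.Sd h d) : T.anc (T.topv h d v) v :=
  (T.topv_spec hv).2.1

lemma topv_idem {v : V} (hv : v ∈ T.Sd h d) : T.topv h d (T.topv h d v) = T.topv h d v := by
  have hs := T.topv_spec hv
  exact T.topv_eq ⟨hs.1, T.anc_refl _, hs.2.2⟩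

lemma topv_eq_of_anc {u v : V} (hu : u ∈ T.Sd h d) (hanc : T.anc u v) :
    T.topv h d v = T.topv h d u := by
  have hs := T.topv_spec hu
  exact T.topv_eq ⟨hs.1, T.anc_trans hs.2.1 hanc, hs.2.2⟩

lemma topv_eq_of_adj {u v : V} (hadj : T.adjIn (T.Sd h d) u v) :
    T.topv h d u = T.topv h d v := by
  rcases hadj.2.2 with hp | hp
  · exact T.topv_eq_of_anc hadj.2.1 (T.anc_of_step hp)
  · exact (T.topv_eq_of_anc hadj.1 (T.anc_of_step hp)).symm

lemma rel_iff_topv_eq {u v : V} (hu : u ∈ T.Sd h d) (hv : v ∈ T.Sd h d) :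
    Relation.ReflTransGen (T.adjIn (T.Sd h d)) u v ↔ T.topv h d u = T.topv h d v := by
  constructor
  · intro hrel
    induction hrel with
    | refl => rfl
    | tail _ hadj ih => exact (ih hadj.1).trans (T.topv_eq_of_adj hadj)
  · intro heq
    have h1 : Relation.ReflTransGen (T.adjIn (T.Sd h d)) (T.topv h d u) u :=
      T.relS_of_anc (T.topv_anc hu) (T.topv_mem hu)
    have h2 : Relation.ReflTransGen (T.adjIn (T.Sd h d)) (T.topv h d v) v :=
      T.relS_of_anc (T.topv_anc hv) (T.topv_mem hv)
    exact Relation.ReflTransGen.trans (T.relS_symm h1) (heq ▸ h2)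

end PhyloTree
namespace PhyloTree

variable {V : Type} [Fintype V] [DecidableEq V] (T : PhyloTree V) {h d : ℝ}

lemma comp_iff_anc {r : V} (hTop : T.IsTop h d r r) (v : V) :
    (v ∈ T.Sd h d ∧ T.topv h d v = r) ↔ T.anc r v := by
  constructor
  · rintro ⟨hv, hvr⟩
    have := T.topv_anc hv
    rwa [hvr] at this
  · intro hanc
    refine ⟨T.Sd_desc_closed hTop.1 hanc, T.topv_eq ⟨hTop.1, hanc, hTop.2.2⟩⟩

lemma isTop_root (hroot : T.root ∈ T.Sd h d) (v : V) : T.IsTop h d T.root v := by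
  refine ⟨hroot, T.anc_root v, ?_⟩
  intro p hp
  rw [T.parent_root] at hp; cases hp

lemma tops_eq_of_comparable {r r' v : V} (hTop : T.IsTop h d r r) (hTop' : T.IsTop h d r' r')
    (h1 : T.anc r v) (h2 : T.anc r' v) : r = r' := by
  rcases T.anc_comparable h1 h2 with hc | hc
  · exact T.isTop_unique (⟨hTop.1, hc, hTop.2.2⟩ : T.IsTop h d r r') hTop'
  · exact (T.isTop_unique (⟨hTop'.1, hc, hTop'.2.2⟩ : T.IsTop h d r' r) hTop).symm

lemma anc_out_iff {r v w : V} (hTop : T.IsTop h d r r) (hv : v ∉ T.Sd h d)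
    (hw : T.anc r w) : T.anc v w ↔ T.anc v r := by
  constructor
  · intro hvw
    rcases T.anc_comparable hvw hw with hc | hc
    · exact hc
    · exact absurd (T.Sd_desc_closed hTop.1 hc) hv
  · intro hvr
    exact T.anc_trans hvr hw

/-- characterization of the components of the induced forest on `Sd`. -/
lemma component_char {C : Set V} (hC : C ∈ T.components (T.Sd h d)) :
    ∃ r, T.IsTop h d r r ∧ C = {u | T.anc r u} := by
  obtain ⟨v, hv, rfl⟩ := hC
  set r := T.topv h d v with hr
  have hspec := T.topv_spec hv
  have hTop : T.IsTop h d r r := ⟨hspec.1, T.anc_refl r, hspec.2.2⟩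
  refine ⟨r, hTop, ?_⟩
  ext u
  simp only [Set.mem_inter_iff, Set.mem_setOf_eq]
  constructor
  · rintro ⟨hu, hrel⟩
    have := (T.rel_iff_topv_eq hv hu).mp hrel
    exact ((T.comp_iff_anc hTop u).mp ⟨hu, this.symm⟩)
  · intro hanc
    have h2 := (T.comp_iff_anc hTop u).mpr hanc
    exact ⟨h2.1, (T.rel_iff_topv_eq hv h2.1).mpr h2.2.symm⟩

lemma component_mem {r : V} (hTop : T.IsTop h d r r) :
    {u | T.anc r u} ∈ T.components (T.Sd h d) := by
  refine ⟨r, hTop.1, ?_⟩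
  ext u
  simp only [Set.mem_setOf_eq, Set.mem_inter_iff]
  constructor
  · intro hanc
    have h2 := (T.comp_iff_anc hTop u).mpr hanc
    exact ⟨h2.1, (T.rel_iff_topv_eq hTop.1 h2.1).mpr (by
      rw [h2.2, T.topv_eq ⟨hTop.1, T.anc_refl r, hTop.2.2⟩])⟩
  · rintro ⟨hu, hrel⟩
    have := (T.rel_iff_topv_eq hTop.1 hu).mp hrel
    rw [T.topv_eq ⟨hTop.1, T.anc_refl r, hTop.2.2⟩] at this
    exact (T.comp_iff_anc hTop u).mp ⟨hu, this.symm⟩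

/-- telescoping sum along the path strictly between `u` and `y`. -/
lemma tel {u y : V} (hanc : T.anc u y) :
    ∑ v ∈ Finset.univ.filter (fun v => T.anc u v ∧ v ≠ u ∧ T.anc v y), T.len v
      = T.hgt y - T.hgt u := by
  unfold anc at hanc
  induction hanc using Relation.ReflTransGen.head_induction_on with
  | refl =>
    rw [Finset.filter_false_of_mem, Finset.sum_empty]
    · ring
    · rintro v - ⟨h1, h2, h3⟩
      exact h2 (T.anc_antisymm h3 h1)
  | @head a c hstep htail ih =>
    have huc : T.anc u c := htail
    have hua : T.anc u a := Relation.ReflTransGen.head hstep htail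
    have hca : T.anc c a := T.anc_of_step hstep
    have hhgt : T.hgt a = T.hgt c + T.len a := T.hgt_eq a c hstep
    have hfe : Finset.univ.filter (fun v => T.anc u v ∧ v ≠ u ∧ T.anc v a)
        = insert a (Finset.univ.filter (fun v => T.anc u v ∧ v ≠ u ∧ T.anc v c)) := by
      ext v
      simp only [Finset.mem_filter, Finset.mem_univ, true_and, Finset.mem_insert]
      constructor
      · rintro ⟨h1, h2, h3⟩
        rcases T.anc_head_cases h3 with he | ⟨w, hw1, hw2⟩
        · exact Or.inl he
        · have : w = c := T.step_unique hw1 hstep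
          subst this
          exact Or.inr ⟨h1, h2, hw2⟩
      · rintro (he | ⟨h1, h2, h3⟩)
        · subst he
          refine ⟨hua, ?_, T.anc_refl _⟩
          intro he'
          have h1 := T.hgt_le_of_anc huc
          have h2 := T.hgt_lt_of_step hstep
          rw [← he'] at h1
          linarith
        · exact ⟨h1, h2, T.anc_trans h3 hca⟩
    have hnot : a ∉ Finset.univ.filter (fun v => T.anc u v ∧ v ≠ u ∧ T.anc v c) := by
      simp only [Finset.mem_filter, Finset.mem_univ, true_and, not_and]
      intro _ _ h3
      have := T.hgt_le_of_anc h3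
      have := T.hgt_lt_of_step hstep
      linarith
    rw [hfe, Finset.sum_insert hnot, ih]
    linarith

/-- total length of edges in a component above a fixed descendant `y` of the top `r`. -/
lemma sum_comp {r y : V} (hTop : T.IsTop h d r r) (hry : T.anc r y) :
    ∑ v ∈ Finset.univ.filter (fun v => v ≠ T.root ∧ T.anc r v ∧ T.anc v y), T.len v
      = (T.hgt y - T.hgt r) + (if r = T.root then 0 else T.len r) := by
  by_cases hr : r = T.root
  · subst hr
    rw [if_pos rfl]
    have hfe : Finset.univ.filter (fun v => v ≠ T.root ∧ T.anc T.root v ∧ T.anc v y)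
        = Finset.univ.filter (fun v => T.anc T.root v ∧ v ≠ T.root ∧ T.anc v y) := by
      ext v; simp only [Finset.mem_filter, Finset.mem_univ, true_and]; tauto
    rw [hfe, T.tel hry, T.hgt_root]
    ring
  · have hfe : Finset.univ.filter (fun v => v ≠ T.root ∧ T.anc r v ∧ T.anc v y)
        = insert r (Finset.univ.filter (fun v => T.anc r v ∧ v ≠ r ∧ T.anc v y)) := by
      ext v
      simp only [Finset.mem_filter, Finset.mem_univ, true_and, Finset.mem_insert]
      constructor
      · rintro ⟨h1, h2, h3⟩
        by_cases hv : v = r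
        · exact Or.inl hv
        · exact Or.inr ⟨h2, hv, h3⟩
      · rintro (he | ⟨h1, h2, h3⟩)
        · subst he
          exact ⟨hr, T.anc_refl _, hry⟩
        · refine ⟨?_, h1, h3⟩
          intro he'
          subst he'
          exact hr (T.anc_antisymm (T.anc_root r) h1).symm
    have hnot : r ∉ Finset.univ.filter (fun v => T.anc r v ∧ v ≠ r ∧ T.anc v y) := by
      simp
    rw [hfe, Finset.sum_insert hnot, T.tel hry, if_neg hr]
    ring

end PhyloTree
namespace PhyloTree

variable {V : Type} [Fintype V] [DecidableEq V] (T : PhyloTree V) {h d : ℝ}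

/-- `v` spans `Y` : some leaf of `Y` is a descendant of `v`. -/
def span (T : PhyloTree V) (Y : Set V) (v : V) : Prop := ∃ x ∈ Y, T.IsLeaf x ∧ T.anc v x

lemma PD_eq (Y : Set V) :
    T.PD Y = ∑ v ∈ Finset.univ.filter (fun v => v ≠ T.root ∧ T.span Y v), T.len v := by
  unfold PD span
  rw [Finset.sum_filter]
  refine Finset.sum_congr rfl fun v _ => ?_
  by_cases hc : v ≠ T.root ∧ ∃ x ∈ Y, T.IsLeaf x ∧ T.anc v x
  · rw [if_pos hc, if_pos hc]
  · rw [if_neg hc, if_neg hc]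

lemma span_in {r y : V} (hTop : T.IsTop h d r r) {Y : Set V} (hYl : Y ⊆ T.leaves)
    (hyY : y ∈ Y) (hYC : ∀ z ∈ Y, T.anc r z → z = y) {v : V} (hrv : T.anc r v) :
    T.span Y v ↔ T.anc v y := by
  constructor
  · rintro ⟨z, hzY, hzl, hvz⟩
    have : z = y := hYC z hzY (T.anc_trans hrv hvz)
    exact this ▸ hvz
  · intro hvy
    exact ⟨y, hyY, hYl hyY, hvy⟩

lemma span_out_swap (hh : ∀ x, T.IsLeaf x → T.hgt x = h) (hd : 0 ≤ d)
    {r y y' : V} (hTop : T.IsTop h d r r)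
    (hy : T.IsLeaf y) (hry : T.anc r y) (hy' : T.IsLeaf y') (hry' : T.anc r y')
    {Y : Set V} (hyY : y ∈ Y)
    {v : V} (hrv : ¬ T.anc r v) :
    T.span (insert y' (Y \ {y})) v ↔ T.span Y v := by
  have key : T.anc v y' ↔ T.anc v y := by
    by_cases hvS : v ∈ T.Sd h d
    · constructor
      · intro hvy'
        exfalso
        have h1 : T.topv h d y' = T.topv h d v := T.topv_eq_of_anc hvS hvy'
        have h2 : T.topv h d y' = r := ((T.comp_iff_anc hTop y').mpr hry').2
        exact hrv ((T.comp_iff_anc hTop v).mp ⟨hvS, h1 ▸ h2⟩)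
      · intro hvy
        exfalso
        have h1 : T.topv h d y = T.topv h d v := T.topv_eq_of_anc hvS hvy
        have h2 : T.topv h d y = r := ((T.comp_iff_anc hTop y).mpr hry).2
        exact hrv ((T.comp_iff_anc hTop v).mp ⟨hvS, h1 ▸ h2⟩)
    · rw [T.anc_out_iff hTop hvS hry', T.anc_out_iff hTop hvS hry]
  constructor
  · rintro ⟨z, hz, hzl, hvz⟩
    rcases Set.mem_insert_iff.mp hz with he | hz'
    · subst he
      exact ⟨y, hyY, hy, key.mp hvz⟩
    · exact ⟨z, hz'.1, hzl, hvz⟩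
  · rintro ⟨z, hz, hzl, hvz⟩
    by_cases he : z = y
    · subst he
      exact ⟨y', Set.mem_insert _ _, hy', key.mpr hvz⟩
    · exact ⟨z, Set.mem_insert_of_mem _ ⟨hz, he⟩, hzl, hvz⟩

/-- replacing the unique chosen leaf of a component by another of its leaves
preserves PD. -/
lemma PD_swap_eq (hh : ∀ x, T.IsLeaf x → T.hgt x = h) (hd : 0 ≤ d)
    {r y y' : V} (hTop : T.IsTop h d r r)
    {Y : Set V} (hYl : Y ⊆ T.leaves) (hyY : y ∈ Y) (hry : T.anc r y)
    (hy' : T.IsLeaf y') (hry' : T.anc r y')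
    (hYC : ∀ z ∈ Y, T.anc r z → z = y) :
    T.PD (insert y' (Y \ {y})) = T.PD Y := by
  have hy : T.IsLeaf y := hYl hyY
  set Y' : Set V := insert y' (Y \ {y}) with hY'
  have hy'Y' : y' ∈ Y' := Set.mem_insert _ _
  have hY'C : ∀ z ∈ Y', T.anc r z → z = y' := by
    rintro z hz hrz
    rcases Set.mem_insert_iff.mp hz with he | hz'
    · exact he
    · exact absurd (hYC z hz'.1 hrz) hz'.2
  have hY'l : Y' ⊆ T.leaves := by
    rintro z hz
    rcases Set.mem_insert_iff.mp hz with he | hz'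
    · exact he ▸ hy'
    · exact hYl hz'.1
  rw [T.PD_eq Y', T.PD_eq Y]
  rw [← Finset.sum_filter_add_sum_filter_not
    (Finset.univ.filter (fun v => v ≠ T.root ∧ T.span Y' v)) (fun v => T.anc r v)]
  rw [← Finset.sum_filter_add_sum_filter_not
    (Finset.univ.filter (fun v => v ≠ T.root ∧ T.span Y v)) (fun v => T.anc r v)]
  congr 1
  · -- inside the component: both equal the component sum
    have e1 : ((Finset.univ.filter (fun v => v ≠ T.root ∧ T.span Y' v)).filter
        (fun v => T.anc r v))
        = Finset.univ.filter (fun v => v ≠ T.root ∧ T.anc r v ∧ T.anc v y') := by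
      ext v
      simp only [Finset.mem_filter, Finset.mem_univ, true_and]
      constructor
      · rintro ⟨⟨h1, h2⟩, h3⟩
        exact ⟨h1, h3, (T.span_in hTop hY'l hy'Y' hY'C h3).mp h2⟩
      · rintro ⟨h1, h2, h3⟩
        exact ⟨⟨h1, (T.span_in hTop hY'l hy'Y' hY'C h2).mpr h3⟩, h2⟩
    have e2 : ((Finset.univ.filter (fun v => v ≠ T.root ∧ T.span Y v)).filter
        (fun v => T.anc r v))
        = Finset.univ.filter (fun v => v ≠ T.root ∧ T.anc r v ∧ T.anc v y) := by
      ext v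
      simp only [Finset.mem_filter, Finset.mem_univ, true_and]
      constructor
      · rintro ⟨⟨h1, h2⟩, h3⟩
        exact ⟨h1, h3, (T.span_in hTop hYl hyY hYC h3).mp h2⟩
      · rintro ⟨h1, h2, h3⟩
        exact ⟨⟨h1, (T.span_in hTop hYl hyY hYC h2).mpr h3⟩, h2⟩
    rw [e1, e2, T.sum_comp hTop hry', T.sum_comp hTop hry, hh y hy, hh y' hy']
  · -- outside the component: identical conditions
    apply Finset.sum_congr _ (fun _ _ => rfl)
    ext v
    simp only [Finset.mem_filter, Finset.mem_univ, true_and]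
    constructor
    · rintro ⟨⟨h1, h2⟩, h3⟩
      exact ⟨⟨h1, (T.span_out_swap hh hd hTop hy hry hy' hry' hyY h3).mp h2⟩, h3⟩
    · rintro ⟨⟨h1, h2⟩, h3⟩
      exact ⟨⟨h1, (T.span_out_swap hh hd hTop hy hry hy' hry' hyY h3).mpr h2⟩, h3⟩

end PhyloTree
namespace PhyloTree

variable {V : Type} [Fintype V] [DecidableEq V] (T : PhyloTree V) {h d : ℝ}

/-- moving a doubled-up leaf to an unoccupied component strictly increases PD. -/
lemma PD_swap_lt (hh : ∀ x, T.IsLeaf x → T.hgt x = h) (hd : 0 ≤ d)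
    {r r' y' y'' x : V}
    (hTop : T.IsTop h d r r) (hTop' : T.IsTop h d r' r') (hne : r ≠ r')
    {Y : Set V} (hYl : Y ⊆ T.leaves)
    (hYC : ∀ z ∈ Y, ¬ T.anc r z)
    (hy' : y' ∈ Y) (hry' : T.anc r' y') (hy'' : y'' ∈ Y) (hry'' : T.anc r' y'')
    (hne' : y' ≠ y'')
    (hx : T.IsLeaf x) (hrx : T.anc r x) :
    T.PD Y < T.PD (insert x (Y \ {y'})) := by
  have hy'l : T.IsLeaf y' := hYl hy'
  have hy''l : T.IsLeaf y'' := hYl hy''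
  set Y' : Set V := insert x (Y \ {y'}) with hY'
  have hY'l : Y' ⊆ T.leaves := by
    rintro z hz
    rcases Set.mem_insert_iff.mp hz with he | hz'
    · exact he ▸ hx
    · exact hYl hz'.1
  -- r is not the root
  have hrroot : r ≠ T.root := by
    rintro rfl
    exact hne (T.isTop_unique (T.isTop_root hTop.1 r') hTop')
  -- the parent of r lies strictly outside Sd
  obtain ⟨p, hp⟩ : ∃ p, T.parent r = some p :=
    Option.isSome_iff_exists.mp (T.parent_isSome r hrroot)
  have hpS : p ∉ T.Sd h d := hTop.2.2 p hp
  have hpd : d < h - T.hgt p := lt_of_not_ge hpS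
  have hhgtr : T.hgt r = T.hgt p + T.len r := T.hgt_eq r p hp
  have hr'd : h - T.hgt r' ≤ d := hTop'.1
  -- the gain and loss predicates
  set G : V → Prop := fun v => v ≠ T.root ∧ T.anc r v ∧ T.anc v x with hG
  set Q : V → Prop := fun v => T.anc r' v ∧ v ≠ r' ∧ T.anc v y' with hQ
  have factG1 : ∀ v, G v → ¬ (v ≠ T.root ∧ T.span Y v) := by
    rintro v ⟨-, hrv, -⟩ ⟨-, z, hzY, -, hvz⟩
    exact hYC z hzY (T.anc_trans hrv hvz)
  have factG2 : ∀ v, G v → (v ≠ T.root ∧ T.span Y' v) :=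
    fun v hv => ⟨hv.1, x, Set.mem_insert _ _, hx, hv.2.2⟩
  have factG3 : ∀ v, G v → ¬ Q v := by
    rintro v ⟨-, hrv, -⟩ ⟨hr'v, -, -⟩
    exact hne (T.tops_eq_of_comparable hTop hTop' hrv hr'v)
  have factQroot : ∀ v, Q v → v ≠ T.root := by
    rintro v ⟨h1, h2, -⟩ rfl
    exact h2 (T.anc_antisymm h1 (T.anc_root r')).symm
  have factL : ∀ v, v ≠ T.root → T.span Y v → ¬ T.span Y' v → Q v := by
    intro v hvroot hsp hsp'
    obtain ⟨z, hzY, hzl, hvz⟩ := hsp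
    have hzy' : z = y' := by
      by_contra hzy
      exact hsp' ⟨z, Set.mem_insert_of_mem _ ⟨hzY, hzy⟩, hzl, hvz⟩
    have hvz' : T.anc v y' := hzy' ▸ hvz
    have hnvy'' : ¬ T.anc v y'' := by
      intro hc
      exact hsp' ⟨y'', Set.mem_insert_of_mem _ ⟨hy'', fun hc' => hne' hc'.symm⟩, hy''l, hc⟩
    have hvS : v ∈ T.Sd h d := by
      by_contra hvS
      have := (T.anc_out_iff hTop' hvS hry').mp hvz'
      exact hnvy'' (T.anc_trans this hry'')
    have h1 : T.topv h d y' = T.topv h d v := T.topv_eq_of_anc hvS hvz'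
    have h2 : T.topv h d y' = r' := ((T.comp_iff_anc hTop' y').mpr hry').2
    have hr'v : T.anc r' v := (T.comp_iff_anc hTop' v).mp ⟨hvS, h1 ▸ h2⟩
    refine ⟨hr'v, ?_, hvz'⟩
    rintro rfl
    exact hnvy'' hry''
  -- pointwise comparison
  have hpoint : ∀ v ∈ Finset.univ,
      (if G v then T.len v else 0) - (if Q v then T.len v else 0) ≤
      (if v ≠ T.root ∧ T.span Y' v then T.len v else 0)
        - (if v ≠ T.root ∧ T.span Y v then T.len v else 0) := by
    rintro v -
    by_cases hGv : G v
    · rw [if_pos hGv, if_neg (factG3 v hGv), if_pos (factG2 v hGv), if_neg (factG1 v hGv)]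
    · rw [if_neg hGv]
      by_cases hcY : v ≠ T.root ∧ T.span Y v
      · by_cases hcY' : v ≠ T.root ∧ T.span Y' v
        · rw [if_pos hcY, if_pos hcY']
          have : (0:ℝ) ≤ if Q v then T.len v else 0 := by
            by_cases hQv : Q v
            · rw [if_pos hQv]
              exact le_of_lt (T.len_pos v (factQroot v hQv))
            · rw [if_neg hQv]
          linarith
        · have hQv : Q v := by
            refine factL v hcY.1 hcY.2 ?_
            intro hsp'
            exact hcY' ⟨hcY.1, hsp'⟩
          rw [if_pos hQv, if_pos hcY, if_neg hcY']
      · rw [if_neg hcY]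
        have h1 : (0:ℝ) ≤ if Q v then T.len v else 0 := by
          by_cases hQv : Q v
          · rw [if_pos hQv]
            exact le_of_lt (T.len_pos v (factQroot v hQv))
          · rw [if_neg hQv]
        have h2 : (0:ℝ) ≤ if v ≠ T.root ∧ T.span Y' v then T.len v else 0 := by
          by_cases hc : v ≠ T.root ∧ T.span Y' v
          · rw [if_pos hc]
            exact le_of_lt (T.len_pos v hc.1)
          · rw [if_neg hc]
        linarith
  have hsum := Finset.sum_le_sum hpoint
  rw [Finset.sum_sub_distrib, Finset.sum_sub_distrib] at hsum
  -- evaluate the G and Q sums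
  have hGsum : ∑ v : V, (if G v then T.len v else 0)
      = (T.hgt x - T.hgt r) + T.len r := by
    rw [← Finset.sum_filter]
    have := T.sum_comp hTop hrx
    rw [if_neg hrroot] at this
    exact this
  have hQsum : ∑ v : V, (if Q v then T.len v else 0) = T.hgt y' - T.hgt r' := by
    rw [← Finset.sum_filter]
    exact T.tel hry'
  have hPD : T.PD Y = ∑ v : V, (if v ≠ T.root ∧ T.span Y v then T.len v else 0) := by
    rw [T.PD_eq Y, Finset.sum_filter]
  have hPD' : T.PD Y' = ∑ v : V, (if v ≠ T.root ∧ T.span Y' v then T.len v else 0) := by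
    rw [T.PD_eq Y', Finset.sum_filter]
  rw [hGsum, hQsum, ← hPD, ← hPD'] at hsum
  have hhx : T.hgt x = h := hh x hx
  have hhy' : T.hgt y' = h := hh y' hy'l
  have : 0 < T.PD Y' - T.PD Y := by
    have : (T.hgt x - T.hgt r) + T.len r - (T.hgt y' - T.hgt r') > 0 := by
      rw [hhx, hhy', hhgtr]
      linarith
    linarith
  linarith

end PhyloTree
/-- counting a finite set by intersecting with a disjoint covering family. -/
lemma sum_parts {α : Type} [Fintype α] [DecidableEq α] :
    ∀ (𝒞 : Finset (Set α)) (Y : Set α),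
      (∀ y ∈ Y, ∃ C ∈ 𝒞, y ∈ C) →
      (∀ C ∈ 𝒞, ∀ C' ∈ 𝒞, C ≠ C' → ∀ a, a ∈ C → a ∈ C' → False) →
      Y.ncard = ∑ C ∈ 𝒞, (Y ∩ C).ncard := by
  intro 𝒞
  induction 𝒞 using Finset.induction with
  | empty =>
    intro Y hcov _
    have hY : Y = ∅ := by
      ext a
      simp only [Set.mem_empty_iff_false, iff_false]
      intro ha
      obtain ⟨C, hC, -⟩ := hcov a ha
      exact absurd hC (Finset.notMem_empty C)
    simp [hY]
  | @insert C₀ 𝒞 hni ih =>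
    intro Y hcov hdisj
    have hdisj2 : Disjoint (Y ∩ C₀) (Y \ C₀) := by
      rw [Set.disjoint_left]
      rintro a ⟨-, h1⟩ ⟨-, h2⟩
      exact h2 h1
    have h1 : Y.ncard = (Y ∩ C₀).ncard + (Y \ C₀).ncard := by
      rw [← Set.ncard_union_eq hdisj2 (Set.toFinite _) (Set.toFinite _)]
      congr 1
      ext a
      by_cases ha : a ∈ C₀ <;> simp [ha]
    have h2 : (Y \ C₀).ncard = ∑ C ∈ 𝒞, ((Y \ C₀) ∩ C).ncard := by
      apply ih
      · rintro y ⟨hy1, hy2⟩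
        obtain ⟨C, hC, hyC⟩ := hcov y hy1
        rcases Finset.mem_insert.mp hC with he | hC'
        · exact absurd (he ▸ hyC) hy2
        · exact ⟨C, hC', hyC⟩
      · intro C hC C' hC' hne a ha ha'
        exact hdisj C (Finset.mem_insert_of_mem hC) C' (Finset.mem_insert_of_mem hC') hne a ha ha'
    have h3 : ∀ C ∈ 𝒞, (Y \ C₀) ∩ C = Y ∩ C := by
      intro C hC
      ext a
      constructor
      · rintro ⟨⟨h1', -⟩, h2'⟩
        exact ⟨h1', h2'⟩
      · rintro ⟨h1', h2'⟩
        refine ⟨⟨h1', ?_⟩, h2'⟩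
        intro haC₀
        have hne : C ≠ C₀ := fun he => hni (he ▸ hC)
        exact hdisj C (Finset.mem_insert_of_mem hC) C₀ (Finset.mem_insert_self _ _) hne a h2' haC₀
    rw [Finset.sum_insert hni, h1, h2]
    congr 1
    exact Finset.sum_congr rfl (fun C hC => by rw [h3 C hC])

namespace PhyloTree

variable {V : Type} [Fintype V] [DecidableEq V] (T : PhyloTree V) {h : ℝ}

/-- the branching distance is nonnegative and attains the component count `k`. -/
lemma branchDist_spec (hh : ∀ x, T.IsLeaf x → T.hgt x = h) {k : ℕ}
    (hbv : T.IsBranchingValue k) :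
    0 ≤ T.branchDist k ∧ T.ccount (T.branchDist k) = k := by
  obtain ⟨e₀, he₀⟩ := hbv
  set D := {e : ℝ | 0 ≤ e ∧ T.ccount e = k} with hD
  have he₀D : e₀ ∈ D := he₀
  have hne : D.Nonempty := ⟨e₀, he₀D⟩
  have hbdd : BddBelow D := ⟨0, fun e he => he.1⟩
  have hd0 : 0 ≤ sInf D := le_csInf hne (fun e he => he.1)
  have hbd : T.branchDist k = sInf D := rfl
  have key : ∃ d₀ ∈ D, T.Sd h (sInf D) = T.Sd h d₀ := by
    by_cases hW : ∀ v : V, v ∈ T.Sd h (sInf D)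
    · refine ⟨e₀, he₀D, ?_⟩
      have hle : sInf D ≤ e₀ := csInf_le hbdd he₀D
      ext v
      constructor
      · intro hv
        have : h - T.hgt v ≤ sInf D := hv
        exact le_trans this hle
      · intro _
        exact hW v
    · push_neg at hW
      set W : Finset V := Finset.univ.filter (fun v => v ∉ T.Sd h (sInf D)) with hWdef
      have hWne : W.Nonempty := by
        obtain ⟨v, hv⟩ := hW
        exact ⟨v, by simp [hWdef, hv]⟩
      have hch : ∀ v, v ∈ W → ∃ e, e ∈ D ∧ e < h - T.hgt v := by
        intro v hv
        have hv' : v ∉ T.Sd h (sInf D) := by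
          simpa [hWdef] using hv
        have : sInf D < h - T.hgt v := lt_of_not_ge hv'
        obtain ⟨e, he1, he2⟩ := exists_lt_of_csInf_lt hne this
        exact ⟨e, he1, he2⟩
      set f : V → ℝ := fun v => if hv : ∃ e, e ∈ D ∧ e < h - T.hgt v
        then Classical.choose hv else 0 with hf
      have hfspec : ∀ v ∈ W, f v ∈ D ∧ f v < h - T.hgt v := by
        intro v hv
        have hex := hch v hv
        simp only [hf, dif_pos hex]
        exact Classical.choose_spec hex
      obtain ⟨v₀, hv₀W, hmin⟩ := Finset.exists_min_image W f hWne
      have hspec₀ := hfspec v₀ hv₀W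
      refine ⟨f v₀, hspec₀.1, ?_⟩
      have hle : sInf D ≤ f v₀ := csInf_le hbdd hspec₀.1
      ext v
      constructor
      · intro hv
        have : h - T.hgt v ≤ sInf D := hv
        exact le_trans this hle
      · intro hv
        by_contra hvS
        have hvW : v ∈ W := by simp [hWdef, hvS]
        have h1 : f v₀ ≤ f v := hmin v hvW
        have h2 := (hfspec v hvW).2
        have : h - T.hgt v ≤ f v₀ := hv
        linarith
  obtain ⟨d₀, hd₀D, hSeq⟩ := key
  have hcc : T.ccount (sInf D) = T.ccount d₀ := by
    unfold ccount
    rw [T.R_eq hh, T.R_eq hh, hSeq]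
  rw [hbd]
  exact ⟨hd0, hcc.trans hd₀D.2⟩

end PhyloTree
/-- Proposition 1 of the paper.  If `k` is a branching value
of an ultrametric rooted phylogenetic tree `T`, then the number of size-`k`
maxPD sets is the product, over the components `κ` of `T[R(d_k)]`, of the
number of leaves in `κ`. -/
theorem m_eq_prod_leaves_of_components
    {V : Type} [Fintype V] [DecidableEq V] (T : PhyloTree V)
    (hU : T.Ultrametric) (k : ℕ) (hbv : T.IsBranchingValue k) :
    T.m k =
      ∏ C ∈ (T.components (T.R (T.branchDist k))).toFinite.toFinset,
        (C ∩ T.leaves).ncard := by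
  classical
  obtain ⟨x₀, hx₀l, -⟩ := T.exists_leaf_desc T.root
  have hh : ∀ x, T.IsLeaf x → T.hgt x = T.hgt x₀ := fun x hx => hU x x₀ hx hx₀l
  set h : ℝ := T.hgt x₀ with hhdef
  obtain ⟨hd0, hkc⟩ := T.branchDist_spec hh hbv
  set d : ℝ := T.branchDist k with hddef
  have hRS : T.R d = T.Sd h d := T.R_eq hh
  set comps : Set (Set V) := T.components (T.Sd h d) with hcompsdef
  set 𝒞 : Finset (Set V) := comps.toFinite.toFinset with h𝒞
  have h𝒞mem : ∀ C, C ∈ 𝒞 ↔ C ∈ comps := fun C => Set.Finite.mem_toFinset _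
  have hFeq : (T.components (T.R d)).toFinite.toFinset = 𝒞 := by
    ext C
    rw [h𝒞mem, Set.Finite.mem_toFinset, hRS]
  rw [hFeq]
  -- structural facts about components
  have hchar : ∀ C ∈ comps, ∃ r, T.IsTop h d r r ∧ C = {u | T.anc r u} :=
    fun C hC => T.component_char hC
  have hdisj : ∀ C ∈ comps, ∀ C' ∈ comps, C ≠ C' → ∀ a, a ∈ C → a ∈ C' → False := by
    intro C hC C' hC' hne a ha ha'
    obtain ⟨r, hTop, rfl⟩ := hchar C hC
    obtain ⟨r', hTop', rfl⟩ := hchar C' hC'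
    exact hne (by rw [T.tops_eq_of_comparable hTop hTop' ha ha'])
  have hleafex : ∀ C ∈ comps, ∃ x, T.IsLeaf x ∧ x ∈ C := by
    intro C hC
    obtain ⟨r, hTop, rfl⟩ := hchar C hC
    obtain ⟨x, hxl, hxanc⟩ := T.exists_leaf_desc r
    exact ⟨x, hxl, hxanc⟩
  have hcover : ∀ x, T.IsLeaf x → ∃ C ∈ comps, x ∈ C := by
    intro x hx
    have hxS : x ∈ T.Sd h d := T.leaf_mem_Sd hh hd0 hx
    have hspec := T.topv_spec hxS
    exact ⟨{u | T.anc (T.topv h d x) u},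
      T.component_mem ⟨hspec.1, T.anc_refl _, hspec.2.2⟩, hspec.2.1⟩
  have hcard : 𝒞.card = k := by
    have hcc : comps.ncard = k := by
      rw [← hkc]
      show comps.ncard = (T.components (T.R d)).ncard
      rw [hRS]
    rwa [Set.ncard_eq_toFinset_card _ comps.toFinite] at hcc
  -- counting leaves by components
  have hsum : ∀ Y : Set V, Y ⊆ T.leaves → Y.ncard = ∑ C ∈ 𝒞, (Y ∩ C).ncard := by
    intro Y hY
    apply sum_parts
    · intro y hy
      obtain ⟨C, hC, hyC⟩ := hcover y (hY hy)
      exact ⟨C, (h𝒞mem C).mpr hC, hyC⟩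
    · intro C hC C' hC' hne a ha ha'
      exact hdisj C ((h𝒞mem C).mp hC) C' ((h𝒞mem C').mp hC') hne a ha ha'
  -- transversals
  set Tr : Set (Set V) := {A | A ⊆ T.leaves ∧ ∀ C ∈ comps, (A ∩ C).ncard = 1} with hTrdef
  have hTrcard : ∀ A ∈ Tr, A.ncard = k := by
    intro A hA
    rw [hsum A hA.1, Finset.sum_congr rfl (fun C hC => hA.2 C ((h𝒞mem C).mp hC)),
      Finset.sum_const, smul_eq_mul, mul_one, hcard]
  -- strict improvement of non-transversals
  have himprove : ∀ Y : Set V, Y ⊆ T.leaves → Y.ncard = k → Y ∉ Tr →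
      ∃ Y' : Set V, Y' ⊆ T.leaves ∧ Y'.ncard = k ∧ T.PD Y < T.PD Y' := by
    intro Y hYl hYk hYnt
    have hYsum : ∑ C ∈ 𝒞, (Y ∩ C).ncard = k := by rw [← hsum Y hYl, hYk]
    have hC₀ex : ∃ C₀ ∈ 𝒞, (Y ∩ C₀).ncard ≠ 1 := by
      by_contra hno
      push_neg at hno
      exact hYnt ⟨hYl, fun C hC => hno C ((h𝒞mem C).mpr hC)⟩
    obtain ⟨C₀, hC₀𝒞, hC₀ne⟩ := hC₀ex
    have hemp : ∃ C ∈ 𝒞, (Y ∩ C).ncard = 0 := by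
      by_contra hno
      push_neg at hno
      have hlt : ∑ C ∈ 𝒞, 1 < ∑ C ∈ 𝒞, (Y ∩ C).ncard := by
        apply Finset.sum_lt_sum
        · intro C hC
          have := hno C hC
          omega
        · refine ⟨C₀, hC₀𝒞, ?_⟩
          have := hno C₀ hC₀𝒞
          omega
      rw [Finset.sum_const, smul_eq_mul, mul_one, hcard, hYsum] at hlt
      omega
    obtain ⟨Cemp, hCemp𝒞, hCemp0⟩ := hemp
    have hCempE : Y ∩ Cemp = ∅ := (Set.ncard_eq_zero (Set.toFinite _)).mp hCemp0
    have hdb : ∃ C ∈ 𝒞, 2 ≤ (Y ∩ C).ncard := by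
      by_contra hno
      push_neg at hno
      have hlt : ∑ C ∈ 𝒞, (Y ∩ C).ncard < ∑ C ∈ 𝒞, 1 := by
        apply Finset.sum_lt_sum
        · intro C hC
          have := hno C hC
          omega
        · exact ⟨Cemp, hCemp𝒞, by omega⟩
      rw [Finset.sum_const, smul_eq_mul, mul_one, hcard, hYsum] at hlt
      omega
    obtain ⟨Cdb, hCdb𝒞, hCdb2⟩ := hdb
    obtain ⟨r, hTopr, hCempchar⟩ := hchar Cemp ((h𝒞mem Cemp).mp hCemp𝒞)
    obtain ⟨r', hTopr', hCdbchar⟩ := hchar Cdb ((h𝒞mem Cdb).mp hCdb𝒞)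
    have hCne : Cemp ≠ Cdb := by
      rintro rfl
      rw [hCemp0] at hCdb2
      omega
    have hrne : r ≠ r' := by
      rintro rfl
      exact hCne (hCempchar.trans hCdbchar.symm)
    obtain ⟨y', hy'mem, y'', hy''mem, hyne⟩ :=
      (Set.one_lt_ncard (Set.toFinite _)).mp (by omega : 1 < (Y ∩ Cdb).ncard)
    obtain ⟨x, hxl, hxC⟩ := hleafex Cemp ((h𝒞mem Cemp).mp hCemp𝒞)
    have hrx : T.anc r x := by rwa [hCempchar] at hxC
    have hry' : T.anc r' y' := by
      have := hy'mem.2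
      rwa [hCdbchar] at this
    have hry'' : T.anc r' y'' := by
      have := hy''mem.2
      rwa [hCdbchar] at this
    have hYC : ∀ z ∈ Y, ¬ T.anc r z := by
      intro z hz hanc
      have hmem : z ∈ Y ∩ Cemp := ⟨hz, by rw [hCempchar]; exact hanc⟩
      rw [hCempE] at hmem
      exact hmem
    have hlt := T.PD_swap_lt hh hd0 hTopr hTopr' hrne hYl hYC hy'mem.1 hry'
      hy''mem.1 hry'' hyne hxl hrx
    refine ⟨insert x (Y \ {y'}), ?_, ?_, hlt⟩
    · rintro z hz
      rcases Set.mem_insert_iff.mp hz with he | hz'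
      · exact he ▸ hxl
      · exact hYl hz'.1
    · have hxY : x ∉ Y \ {y'} := by
        rintro ⟨hxY, -⟩
        exact hYC x hxY hrx
      rw [Set.ncard_insert_of_notMem hxY (Set.toFinite _),
        Set.ncard_diff_singleton_of_mem hy'mem.1, hYk]
      have hk1 : 0 < k := by
        rw [← hYk]
        exact (Set.ncard_pos (Set.toFinite _)).mpr ⟨y', hy'mem.1⟩
      omega
  -- all transversals have equal PD
  have htrans_eq : ∀ A ∈ Tr, ∀ B ∈ Tr, T.PD A = T.PD B := by
    have main : ∀ n (A B : Set V), A ∈ Tr → B ∈ Tr →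
        (𝒞.filter (fun C => A ∩ C ≠ B ∩ C)).card ≤ n → T.PD A = T.PD B := by
      intro n
      induction n with
      | zero =>
        intro A B hA hB hcard0
        have hAB : ∀ C ∈ 𝒞, A ∩ C = B ∩ C := by
          intro C hC
          by_contra hne
          have hmem : C ∈ 𝒞.filter (fun C => A ∩ C ≠ B ∩ C) :=
            Finset.mem_filter.mpr ⟨hC, hne⟩
          have := Finset.card_pos.mpr ⟨C, hmem⟩
          omega
        have heq : A = B := by
          ext a
          constructor
          · intro ha
            obtain ⟨C, hC, haC⟩ := hcover a (hA.1 ha)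
            have hm : a ∈ B ∩ C := (hAB C ((h𝒞mem C).mpr hC)) ▸ (⟨ha, haC⟩ : a ∈ A ∩ C)
            exact hm.1
          · intro ha
            obtain ⟨C, hC, haC⟩ := hcover a (hB.1 ha)
            have hm : a ∈ A ∩ C := (hAB C ((h𝒞mem C).mpr hC)).symm ▸ (⟨ha, haC⟩ : a ∈ B ∩ C)
            exact hm.1
        rw [heq]
      | succ n ih =>
        intro A B hA hB hcard
        by_cases h0 : (𝒞.filter (fun C => A ∩ C ≠ B ∩ C)).card = 0
        · exact ih A B hA hB (by omega)
        · obtain ⟨C, hCf⟩ := Finset.card_pos.mp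
            (show 0 < (𝒞.filter (fun C => A ∩ C ≠ B ∩ C)).card by omega)
          obtain ⟨hC𝒞, hCne⟩ := Finset.mem_filter.mp hCf
          have hCcomps := (h𝒞mem C).mp hC𝒞
          obtain ⟨rc, hToprc, hCchar⟩ := hchar C hCcomps
          obtain ⟨a, haA⟩ := Set.ncard_eq_one.mp (hA.2 C hCcomps)
          obtain ⟨b, hbB⟩ := Set.ncard_eq_one.mp (hB.2 C hCcomps)
          have haAC : a ∈ A ∩ C := by rw [haA]; exact rfl
          have hbBC : b ∈ B ∩ C := by rw [hbB]; exact rfl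
          have hra : T.anc rc a := by
            have := haAC.2
            rwa [hCchar] at this
          have hrb : T.anc rc b := by
            have := hbBC.2
            rwa [hCchar] at this
          have hbl : T.IsLeaf b := hB.1 hbBC.1
          have hYCa : ∀ z ∈ A, T.anc rc z → z = a := by
            intro z hz hanc
            have hm : z ∈ A ∩ C := ⟨hz, by rw [hCchar]; exact hanc⟩
            rw [haA] at hm
            exact hm
          have hPDswap := T.PD_swap_eq hh hd0 hToprc hA.1 haAC.1 hra hbl hrb hYCa
          have hswapC : insert b (A \ {a}) ∩ C = {b} := by
            ext z
            constructor
            · rintro ⟨hz1, hz2⟩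
              rcases Set.mem_insert_iff.mp hz1 with he | hz'
              · exact he
              · exfalso
                have hm : z ∈ A ∩ C := ⟨hz'.1, hz2⟩
                rw [haA] at hm
                exact hz'.2 hm
            · intro he
              have he' : z = b := he
              subst he'
              exact ⟨Set.mem_insert _ _, hbBC.2⟩
          have hswapD : ∀ D ∈ comps, D ≠ C → insert b (A \ {a}) ∩ D = A ∩ D := by
            intro D hD hDC
            ext z
            constructor
            · rintro ⟨hz1, hz2⟩
              rcases Set.mem_insert_iff.mp hz1 with he | hz'
              · exfalso
                subst he
                exact hdisj D hD C hCcomps hDC z hz2 hbBC.2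
              · exact ⟨hz'.1, hz2⟩
            · rintro ⟨hz1, hz2⟩
              exact ⟨Set.mem_insert_of_mem _
                ⟨hz1, fun he => hdisj D hD C hCcomps hDC z hz2 (he ▸ haAC.2)⟩, hz2⟩
          have hA'Tr : insert b (A \ {a}) ∈ Tr := by
            constructor
            · rintro z hz
              rcases Set.mem_insert_iff.mp hz with he | hz'
              · exact he ▸ hbl
              · exact hA.1 hz'.1
            · intro D hD
              by_cases hDC : D = C
              · subst hDC
                rw [hswapC, Set.ncard_singleton]
              · rw [hswapD D hD hDC]
                exact hA.2 D hD
          have hfilter : (𝒞.filter (fun D => insert b (A \ {a}) ∩ D ≠ B ∩ D)).card ≤ n := by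
            have hsub : 𝒞.filter (fun D => insert b (A \ {a}) ∩ D ≠ B ∩ D) ⊆
                (𝒞.filter (fun D => A ∩ D ≠ B ∩ D)).erase C := by
              intro D hD
              obtain ⟨hD𝒞, hDne⟩ := Finset.mem_filter.mp hD
              have hDneC : D ≠ C := by
                rintro rfl
                exact hDne (hswapC.trans hbB.symm)
              exact Finset.mem_erase.mpr ⟨hDneC, Finset.mem_filter.mpr ⟨hD𝒞,
                fun hEq => hDne ((hswapD D ((h𝒞mem D).mp hD𝒞) hDneC).trans hEq)⟩⟩
            have h1 := Finset.card_le_card hsub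
            have h2 := Finset.card_erase_of_mem hCf
            omega
          have hPD' := ih (insert b (A \ {a})) B hA'Tr hB hfilter
          exact hPDswap.symm.trans hPD'
    intro A hA B hB
    exact main (𝒞.filter (fun C => A ∩ C ≠ B ∩ C)).card A B hA hB le_rfl
  -- the transversal--choice-function bijection
  set Φ : (∀ C : {C // C ∈ 𝒞}, {x : V // x ∈ (C.val : Set V) ∩ T.leaves}) → Set V :=
    fun f => {x | ∃ C, (f C).val = x} with hΦdef
  have hΦTr : ∀ f, Φ f ∈ Tr := by
    intro f
    constructor
    · rintro z ⟨C, hC⟩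
      rw [← hC]
      exact ((f C).2).2
    · intro D hD
      have hD𝒞 : D ∈ 𝒞 := (h𝒞mem D).mpr hD
      have hsing : Φ f ∩ D = {(f ⟨D, hD𝒞⟩).val} := by
        ext z
        constructor
        · rintro ⟨⟨C, hC⟩, hzD⟩
          have hzC : z ∈ (C.val : Set V) := by
            rw [← hC]
            exact ((f C).2).1
          have hCeq : C = ⟨D, hD𝒞⟩ := by
            apply Subtype.ext
            by_contra hne
            exact hdisj C.val ((h𝒞mem _).mp C.2) D hD hne z hzC hzD
          rw [← hC, hCeq]
          rfl
        · intro he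
          have he' : z = (f ⟨D, hD𝒞⟩).val := he
          subst he'
          exact ⟨⟨⟨D, hD𝒞⟩, rfl⟩, ((f ⟨D, hD𝒞⟩).2).1⟩
      rw [hsing, Set.ncard_singleton]
  have hΦsurj : ∀ A ∈ Tr, ∃ f, Φ f = A := by
    intro A hA
    have hchoose : ∀ C : {C // C ∈ 𝒞}, ∃ a, A ∩ C.val = {a} := fun C =>
      Set.ncard_eq_one.mp (hA.2 C.val ((h𝒞mem _).mp C.2))
    choose g hg using hchoose
    have hgmem : ∀ C : {C // C ∈ 𝒞}, g C ∈ A ∩ C.val := by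
      intro C
      rw [hg C]
      exact rfl
    refine ⟨fun C => ⟨g C, (hgmem C).2, hA.1 (hgmem C).1⟩, ?_⟩
    ext z
    constructor
    · rintro ⟨C, hC⟩
      rw [← hC]
      exact (hgmem C).1
    · intro hz
      obtain ⟨C, hC, hzC⟩ := hcover z (hA.1 hz)
      have hC𝒞 : C ∈ 𝒞 := (h𝒞mem C).mpr hC
      have hm : z ∈ A ∩ C := ⟨hz, hzC⟩
      rw [hg ⟨C, hC𝒞⟩] at hm
      exact ⟨⟨C, hC𝒞⟩, hm.symm⟩
  have hΦinj : Function.Injective Φ := by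
    intro f g hfg
    funext C
    apply Subtype.ext
    have h1 : (f C).val ∈ Φ f := ⟨C, rfl⟩
    rw [hfg] at h1
    obtain ⟨C', hC'⟩ := h1
    have hCC' : C' = C := by
      apply Subtype.ext
      by_contra hne
      exact hdisj C'.val ((h𝒞mem _).mp C'.2) C.val ((h𝒞mem _).mp C.2) hne (f C).val
        (by rw [← hC']; exact ((g C').2).1) ((f C).2).1
    rw [← hC', hCC']
  have hTrim : Tr = Set.range Φ := by
    ext A
    constructor
    · intro hA
      obtain ⟨f, hf⟩ := hΦsurj A hA
      exact ⟨f, hf⟩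
    · rintro ⟨f, rfl⟩
      exact hΦTr f
  -- a transversal exists, hence a maximum over the k-subsets of leaves exists
  have hfex : ∀ C : {C // C ∈ 𝒞}, ∃ x : V, x ∈ (C.val : Set V) ∩ T.leaves := by
    intro C
    obtain ⟨x, hxl, hxC⟩ := hleafex C.val ((h𝒞mem _).mp C.2)
    exact ⟨x, hxC, hxl⟩
  have hTrne : Tr.Nonempty := ⟨Φ (fun C => ⟨Classical.choose (hfex C),
    Classical.choose_spec (hfex C)⟩), hΦTr _⟩
  obtain ⟨A₀, hA₀⟩ := hTrne
  obtain ⟨M, hM, hMmax⟩ := Set.exists_max_image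
    {Y : Set V | Y ⊆ T.leaves ∧ Y.ncard = k} T.PD (Set.toFinite _)
    ⟨A₀, hA₀.1, hTrcard A₀ hA₀⟩
  have hMTr : M ∈ Tr := by
    by_contra hMnt
    obtain ⟨Y', hY'1, hY'2, hY'3⟩ := himprove M hM.1 hM.2 hMnt
    have := hMmax Y' ⟨hY'1, hY'2⟩
    linarith
  -- the maxPD sets are exactly the transversals
  have hmaxTr : {A : Set V | T.IsMaxPD k A} = Tr := by
    ext A
    constructor
    · intro hA
      by_contra hAnt
      obtain ⟨Y', hY'1, hY'2, hY'3⟩ := himprove A hA.1 hA.2.1 hAnt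
      have := hA.2.2 Y' hY'1 hY'2
      linarith
    · intro hA
      refine ⟨hA.1, hTrcard A hA, ?_⟩
      intro Y hY1 hY2
      have h1 : T.PD Y ≤ T.PD M := hMmax Y ⟨hY1, hY2⟩
      have h2 : T.PD M = T.PD A := htrans_eq M hMTr A hA
      linarith
  -- count the transversals
  have hmdef : T.m k = {A : Set V | T.IsMaxPD k A}.ncard := rfl
  rw [hmdef, hmaxTr, hTrim, ← Set.image_univ,
    Set.ncard_image_of_injective _ hΦinj, Set.ncard_univ, Nat.card_pi]
  rw [← Finset.prod_coe_sort 𝒞 (fun C => (C ∩ T.leaves).ncard)]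
  exact Finset.prod_congr rfl (fun C _ => Nat.card_coe_set_eq _)
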